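/- Two similar alt-path structures obtained from the same binary tree T realize the same shortest distance matrix: for every pair of leaves x,y, the shortest-path distance between x and y in the first alt-path structure equals the shortest-path distance between the corresponding leaves in the second. -/

import Mathlib

open SimpleGraph

/-- The degree of a vertex (defined without decidability assumptions). -/
noncomputable def gdeg {V : Type} (G : SimpleGraph V) (v : V) : ℕ :=
  {u | G.Adj v u}.ncard

/-- The longest distance between two vertices: the supremum of the lengths of
paths between them. -/
noncomputable def ldistV {V : Type} (G : SimpleGraph V) (u v : V) : ℕ :=
  sSup {n | ∃ p : G.Walk u v, p.IsPath ∧ p.length = n}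

/-- A binary unrooted phylogenetic network on the leaf-label set `X`:
a simple connected graph whose degree-1 vertices (the leaves) are bijectively
labelled by `X`, every other vertex having degree 3, with at least two leaves. -/
structure PhyloNet (V X : Type) where
  G : SimpleGraph V
  conn : G.Connected
  leaf : X → V
  leafInj : Function.Injective leaf
  leafDeg : ∀ x : X, gdeg G (leaf x) = 1
  internalDeg : ∀ v : V, v ∉ Set.range leaf → gdeg G v = 3
  leafSurj : ∀ v : V, gdeg G v = 1 → v ∈ Set.range leaf
  twoLeaves : Nontrivial X

namespace PhyloNet

variable {V W X : Type}

/-- Shortest distance between two leaves. -/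
noncomputable def dm (N : PhyloNet V X) (x y : X) : ℕ :=
  N.G.dist (N.leaf x) (N.leaf y)

/-- Longest distance between two leaves. -/
noncomputable def dl (N : PhyloNet V X) (x y : X) : ℕ :=
  ldistV N.G (N.leaf x) (N.leaf y)

/-- Two networks on the same label set realize the same shortest distance matrix. -/
def SameDist (N : PhyloNet V X) (M : PhyloNet W X) : Prop :=
  ∀ x y : X, N.dm x y = M.dm x y

/-- Two networks realize the same longest distance matrix. -/
def SameLDist (N : PhyloNet V X) (M : PhyloNet W X) : Prop :=
  ∀ x y : X, N.dl x y = M.dl x y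

/-- Label-preserving isomorphism of networks. -/
def Isom (N : PhyloNet V X) (M : PhyloNet W X) : Prop :=
  ∃ φ : N.G ≃g M.G, ∀ x : X, φ (N.leaf x) = M.leaf x

/-- `N` is reconstructible from its shortest distance matrix. -/
def Reconstructible (N : PhyloNet V X) : Prop :=
  ∀ (W : Type) (M : PhyloNet W X), N.SameDist M → N.Isom M

/-- Two leaves form a cherry: they share a common neighbour. -/
def Cherry (N : PhyloNet V X) (x y : X) : Prop :=
  x ≠ y ∧ ∃ v : V, N.G.Adj (N.leaf x) v ∧ N.G.Adj (N.leaf y) v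

def NoCherry (N : PhyloNet V X) : Prop := ∀ x y : X, ¬ N.Cherry x y

/-- `uv` is a cut-edge. -/
def IsCutEdge (N : PhyloNet V X) (u v : V) : Prop :=
  N.G.Adj u v ∧ ¬ (N.G.deleteEdges {s(u, v)}).Reachable u v

/-- Leaf `x` lies on the `u`-side of the cut-edge `uv`. -/
def leafSide (N : PhyloNet V X) (u v : V) (x : X) : Prop :=
  (N.G.deleteEdges {s(u, v)}).Reachable (N.leaf x) u

/-- `A` is a part of a cut-edge induced split of `N`. -/
def IsSplitPart (N : PhyloNet V X) (A : Set X) : Prop :=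
  ∃ u v : V, N.IsCutEdge u v ∧ ∀ x : X, N.leafSide u v x ↔ x ∈ A

/-- Every cut-edge of `N` induces a unique split. -/
def UniqueSplits (N : PhyloNet V X) : Prop :=
  ∀ u v u' v' : V, N.IsCutEdge u v → N.IsCutEdge u' v' →
    ((∀ x : X, N.leafSide u v x ↔ N.leafSide u' v' x) ∨
      (∀ x : X, N.leafSide u v x ↔ N.leafSide v' u' x)) →
    s(u, v) = s(u', v')

/-- `l` is a chain of leaves: the neighbours of its members form a path. -/
def IsChain (N : PhyloNet V X) (l : List X) : Prop :=
  l ≠ [] ∧ ∃ vs : List V, ∃ h : vs.length = l.length,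
    vs.Nodup ∧ List.Chain' N.G.Adj vs ∧
    ∀ (i : ℕ) (hi : i < l.length),
      N.G.Adj (N.leaf (l.get ⟨i, hi⟩)) (vs.get ⟨i, by omega⟩)

/-- A maximal chain: not a subsequence of any other chain. -/
def MaxChain (N : PhyloNet V X) (l : List X) : Prop :=
  N.IsChain l ∧ ∀ m : List X, N.IsChain m → l.Sublist m → m = l

end PhyloNet

/-- A set of at least three vertices is 2-connected if it induces a connected
graph that stays connected after removal of any single vertex. -/
def TwoConn {V : Type} (G : SimpleGraph V) (B : Set V) : Prop :=
  3 ≤ B.ncard ∧ (G.induce B).Connected ∧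
    ∀ v ∈ B, (G.induce (B \ {v})).Connected

/-- A blob: a maximal 2-connected set of vertices (with at least three vertices). -/
def IsBlob {V : Type} (G : SimpleGraph V) (B : Set V) : Prop :=
  TwoConn G B ∧ ∀ C : Set V, TwoConn G C → B ⊆ C → C = B

/-- Number of edges with both endpoints in `B`. -/
noncomputable def edgesIn {V : Type} (G : SimpleGraph V) (B : Set V) : ℕ :=
  {e : Sym2 V | e ∈ G.edgeSet ∧ ∀ v ∈ e, v ∈ B}.ncard

/-- `G` is a level-(≤ k) network: every blob has cycle rank at most `k`,
i.e. removing at most `k` edges from each blob yields a tree. -/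
def LevelLE {V : Type} (G : SimpleGraph V) (k : ℕ) : Prop :=
  ∀ B : Set V, IsBlob G B → edgesIn G B ≤ (B.ncard - 1) + k

namespace PhyloNet

variable {V X : Type}

/-- A trivial cut-edge is one incident to a leaf. -/
def TrivialCutEdge (N : PhyloNet V X) (u v : V) : Prop :=
  u ∈ Set.range N.leaf ∨ v ∈ Set.range N.leaf

/-- A pendant blob: a blob incident to exactly one non-trivial cut-edge. -/
def IsPendantBlob (N : PhyloNet V X) (B : Set V) : Prop :=
  IsBlob N.G B ∧
    ∃! e : Sym2 V, ∃ u v : V, e = s(u, v) ∧ u ∈ B ∧ v ∉ B ∧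
      N.G.Adj u v ∧ ¬ N.TrivialCutEdge u v

/-- The leaves attached to (contained in) a blob. -/
def blobLeaves (N : PhyloNet V X) (B : Set V) : Set X :=
  {x : X | ∃ u ∈ B, N.G.Adj (N.leaf x) u}

/-- `N` has a leaf on each generator side: every vertex is within shortest
distance 2 of some leaf. -/
def LeafOnEachGenSide (N : PhyloNet V X) : Prop :=
  ∀ v : V, ∃ x : X, N.G.dist v (N.leaf x) ≤ 2

end PhyloNet

/-- `u` is a leaf of the tree `T`. -/
def TreeLeaf {U : Type} (T : SimpleGraph U) (u : U) : Prop := gdeg T u = 1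

/-- The vertices of the alt-path structure of a tree `T` with proper
2-colouring `c` (black = `true`) and pendant-blob leaf counts `k`.
* Each red internal vertex is kept (`plain`).
* Each black internal vertex is replaced by a level-2 blob with attachment
  points `gv _ _ _ i` and poles `pole _ _ _ b`.
* Each black leaf `u` is replaced by a pendant level-2 blob of the form
  `(k u, 0, 0, 0)`: poles `lpole _ _ _ b`, attachment vertex `att`,
  spine vertices `spine` and pendant leaves `leafv`.
* Each red leaf `u` is replaced by a pendant level-1 blob: the cycle on
  `att` and the `spine` vertices, with pendant leaves `leafv`. -/
inductive APV (U : Type) (T : SimpleGraph U) (c : U → Bool) (k : U → ℕ) : Type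
  | plain (u : U) (h : ¬ TreeLeaf T u) (hc : c u = false) : APV U T c k
  | gv (u : U) (h : ¬ TreeLeaf T u) (hc : c u = true) (i : Fin 3) : APV U T c k
  | pole (u : U) (h : ¬ TreeLeaf T u) (hc : c u = true) (b : Bool) : APV U T c k
  | lpole (u : U) (h : TreeLeaf T u) (hc : c u = true) (b : Bool) : APV U T c k
  | att (u : U) (h : TreeLeaf T u) : APV U T c k
  | spine (u : U) (h : TreeLeaf T u) (i : Fin (k u)) : APV U T c k
  | leafv (u : U) (h : TreeLeaf T u) (i : Fin (k u)) : APV U T c k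

/-- The attachment point (port) of the gadget replacing `u`, towards the
neighbouring tree vertex `w`; `nu` chooses which of the three attachment
points of a black internal gadget is used for each neighbour. -/
noncomputable def APport {U : Type} (T : SimpleGraph U) (c : U → Bool)
    (k : U → ℕ) (nu : U → U → Fin 3) (u w : U) : APV U T c k := by
  classical
  exact if h : TreeLeaf T u then APV.att u h
    else if hc : c u = true then APV.gv u h hc (nu u w)
    else APV.plain u h (by simpa using hc)

/-- The edges of the alt-path structure (one direction of each edge). -/
inductive APRel {U : Type} (T : SimpleGraph U) (c : U → Bool) (k : U → ℕ)
    (nu : U → U → Fin 3) : APV U T c k → APV U T c k → Prop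
  | poleGv (u : U) (h : ¬ TreeLeaf T u) (hc : c u = true) (b : Bool) (i : Fin 3) :
      APRel T c k nu (.pole u h hc b) (.gv u h hc i)
  | lpoles (u : U) (h : TreeLeaf T u) (hc : c u = true) :
      APRel T c k nu (.lpole u h hc true) (.lpole u h hc false)
  | lpoleAtt (u : U) (h : TreeLeaf T u) (hc : c u = true) (b : Bool) :
      APRel T c k nu (.lpole u h hc b) (.att u h)
  | lpoleSpineFirst (u : U) (h : TreeLeaf T u) (hc : c u = true) (h0 : 0 < k u) :
      APRel T c k nu (.lpole u h hc true) (.spine u h ⟨0, h0⟩)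
  | lpoleSpineLast (u : U) (h : TreeLeaf T u) (hc : c u = true) (h0 : 0 < k u) :
      APRel T c k nu (.lpole u h hc false) (.spine u h ⟨k u - 1, by omega⟩)
  | spineChain (u : U) (h : TreeLeaf T u) (i : ℕ) (hi : i + 1 < k u) :
      APRel T c k nu (.spine u h ⟨i, by omega⟩) (.spine u h ⟨i + 1, hi⟩)
  | leafSpine (u : U) (h : TreeLeaf T u) (i : Fin (k u)) :
      APRel T c k nu (.leafv u h i) (.spine u h i)
  | attSpineFirst (u : U) (h : TreeLeaf T u) (hc : c u = false) (h0 : 0 < k u) :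
      APRel T c k nu (.att u h) (.spine u h ⟨0, h0⟩)
  | attSpineLast (u : U) (h : TreeLeaf T u) (hc : c u = false) (h0 : 0 < k u) :
      APRel T c k nu (.att u h) (.spine u h ⟨k u - 1, by omega⟩)
  | cross (u w : U) (hadj : T.Adj u w) :
      APRel T c k nu (APport T c k nu u w) (APport T c k nu w u)

/-- The alt-path structure of the tree `T` for the colouring `c`. -/
noncomputable def APGraph {U : Type} (T : SimpleGraph U) (c : U → Bool)
    (k : U → ℕ) (nu : U → U → Fin 3) : SimpleGraph (APV U T c k) :=
  SimpleGraph.fromRel (APRel T c k nu)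

section APProof

open SimpleGraph

variable {U : Type} {T : SimpleGraph U} {c : U → Bool} {k : U → ℕ}
  {nu : U → U → Fin 3}

/-- numeric value of a colour -/
noncomputable def cbit (c : U → Bool) (z : U) : ℕ := if c z then 1 else 0

/-- distance of spine index `i` to the nearer end of the spine of gadget `z` -/
def mnv (k : U → ℕ) (z : U) (i : ℕ) : ℕ := min i (k z - 1 - i)

lemma cbit_le_one (c : U → Bool) (z : U) : cbit c z ≤ 1 := by
  unfold cbit; split <;> omega

lemma cbit_add_eq_one {a b : U} (h : c a ≠ c b) : cbit c a + cbit c b = 1 := by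
  unfold cbit
  cases ha : c a <;> cases hb : c b <;> simp_all

lemma cbit_true {a : U} (h : c a = true) : cbit c a = 1 := by simp [cbit, h]
lemma cbit_false {a : U} (h : c a = false) : cbit c a = 0 := by simp [cbit, h]

/-- tree facts -/
lemma dist_adj_le (hconn : T.Connected) {a b : U} (hadj : T.Adj a b) (w : U) :
    T.dist a w ≤ T.dist b w + 1 := by
  have h1 : T.dist a w ≤ T.dist a b + T.dist b w := hconn.dist_triangle
  have h2 : T.dist a b ≤ 1 := by
    have := SimpleGraph.dist_le (Walk.cons hadj Walk.nil)
    simpa using this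
  omega

lemma color_iff_even_walk (hcp : ∀ u w : U, T.Adj u w → c u ≠ c w) :
    ∀ {a b : U} (p : T.Walk a b), (c a = c b) ↔ Even p.length := by
  intro a b p
  induction p with
  | nil => simp
  | @cons x y z h p ih =>
    have hxy := hcp x y h
    simp only [Walk.length_cons]
    rw [Nat.even_add_one, ← ih]
    cases hx : c x <;> cases hy : c y <;> cases hz : c z <;> simp_all

lemma color_iff_even_dist (hconn : T.Connected)
    (hcp : ∀ u w : U, T.Adj u w → c u ≠ c w) (a b : U) :
    (c a = c b) ↔ Even (T.dist a b) := by
  obtain ⟨p, hp⟩ := (hconn.preconnected a b).exists_walk_length_eq_dist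
  rw [← hp]; exact color_iff_even_walk hcp p

lemma adj_dist_cases (hconn : T.Connected)
    (hcp : ∀ u w : U, T.Adj u w → c u ≠ c w) {a b : U} (hadj : T.Adj a b) (w : U) :
    T.dist a w = T.dist b w + 1 ∨ T.dist b w = T.dist a w + 1 := by
  have h1 := dist_adj_le hconn hadj w
  have h2 := dist_adj_le hconn hadj.symm w
  have hne : T.dist a w ≠ T.dist b w := by
    intro he
    have e1 := color_iff_even_dist hconn hcp a w
    have e2 := color_iff_even_dist hconn hcp b w
    rw [he] at e1
    have hiff : (c a = c w) ↔ (c b = c w) := e1.trans e2.symm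
    have : c a = c b := by
      cases ha : c a <;> cases hb : c b <;> cases hw : c w <;> simp_all
    exact hcp a b hadj this
  omega

lemma adj_dist_one (hconn : T.Connected) {a w : U} (hadj : T.Adj a w) :
    T.dist a w = 1 := by
  have h1 : T.dist a w ≤ 1 := by
    have := SimpleGraph.dist_le (Walk.cons hadj Walk.nil)
    simpa using this
  have h2 : 0 < T.dist a w := hconn.pos_dist_of_ne hadj.ne
  omega

lemma leaf_dist (hconn : T.Connected) {y z w : U} (hleaf : TreeLeaf T y)
    (hadj : T.Adj y z) (hne : y ≠ w) : T.dist y w = T.dist z w + 1 := by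
  have hpos : 0 < T.dist y w := hconn.pos_dist_of_ne hne
  obtain ⟨p, hp⟩ := (hconn.preconnected y w).exists_walk_length_eq_dist
  cases p with
  | nil => exact absurd rfl hne
  | @cons _ z' _ h' q =>
    obtain ⟨a, ha⟩ := Set.ncard_eq_one.mp (hleaf : ({u | T.Adj y u}).ncard = 1)
    have hz : z ∈ {u | T.Adj y u} := hadj
    have hz' : z' ∈ {u | T.Adj y u} := h'
    rw [ha] at hz hz'
    have hzz : z' = z := by
      simp only [Set.mem_singleton_iff] at hz hz'; rw [hz', hz]
    have h3 : T.dist z w ≤ q.length := by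
      have := SimpleGraph.dist_le q
      rwa [show T.dist z' w = T.dist z w from by rw [hzz]] at this
    have h4 := dist_adj_le hconn hadj w
    simp only [Walk.length_cons] at hp
    omega

end APProof
section APProof2

open SimpleGraph

variable {U : Type} {T : SimpleGraph U} {c : U → Bool} {k : U → ℕ}
  {nu : U → U → Fin 3}

open Classical

/-- Forward attachment point predicate. -/
def FwdAP (T : SimpleGraph U) (nu : U → U → Fin 3) (w z : U) (i : Fin 3) : Prop :=
  ∃ y, T.Adj z y ∧ T.dist y w < T.dist z w ∧ nu z y = i

/-- The potential function: the conjectured distance to the leaf vertex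
`leafv w _ j` in the alt-path structure. -/
noncomputable def phiAP (T : SimpleGraph U) (c : U → Bool) (k : U → ℕ)
    (nu : U → U → Fin 3) (w : U) (j : ℕ) : APV U T c k → ℕ
  | .plain z _ _ => 2 * T.dist z w + (mnv k w j + 2)
  | .gv z _ _ i => if FwdAP T nu w z i
      then 2 * T.dist z w + (mnv k w j + 2) - 1
      else 2 * T.dist z w + (mnv k w j + 2) + 1
  | .pole z _ _ _ => 2 * T.dist z w + (mnv k w j + 2)
  | .lpole z _ _ b => if z = w then
        (if b then min (j + 2) (k w + 2 - j) else min (k w + 1 - j) (j + 3))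
      else 2 * T.dist z w + (mnv k w j + 2)
  | .att z _ => if z = w then (mnv k w j + 2) + cbit c w
      else 2 * T.dist z w + (mnv k w j + 2) - cbit c z
  | .spine z _ i => if z = w then Nat.dist i.val j + 1
      else 2 * T.dist z w + (mnv k w j + 2) + mnv k z i.val + 1
  | .leafv z _ i => if z = w then (if i.val = j then 0 else Nat.dist i.val j + 2)
      else 2 * T.dist z w + (mnv k w j + 2) + mnv k z i.val + 2

/-- base tree vertex of a gadget vertex -/
def APbase : APV U T c k → U
  | .plain z _ _ => z
  | .gv z _ _ _ => z
  | .pole z _ _ _ => z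
  | .lpole z _ _ _ => z
  | .att z _ => z
  | .spine z _ _ => z
  | .leafv z _ _ => z

lemma APbase_port (u w : U) : APbase (APport T c k nu u w) = u := by
  unfold APport
  split_ifs <;> rfl

lemma APport_leaf {u : U} (h : TreeLeaf T u) (w : U) :
    APport T c k nu u w = APV.att u h := by
  unfold APport; rw [dif_pos h]

lemma APport_black {u : U} (h : ¬ TreeLeaf T u) (hb : c u = true) (w : U) :
    APport T c k nu u w = APV.gv u h hb (nu u w) := by
  unfold APport; rw [dif_neg h, dif_pos hb]

lemma APport_red {u : U} (h : ¬ TreeLeaf T u) (hb : c u = false) (w : U) :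
    APport T c k nu u w = APV.plain u h (by simp [hb]) := by
  unfold APport; rw [dif_neg h, dif_neg (by simp [hb])]

lemma adjAP {a b : APV U T c k} (hne : a ≠ b) (h : APRel T c k nu a b) :
    (APGraph T c k nu).Adj a b := by
  rw [APGraph, SimpleGraph.fromRel_adj]
  exact ⟨hne, Or.inl h⟩

lemma adjAP_cross {a b : U} (hadj : T.Adj a b) :
    (APGraph T c k nu).Adj (APport T c k nu a b) (APport T c k nu b a) := by
  refine adjAP ?_ (APRel.cross a b hadj)
  intro hcon
  have := congrArg (APbase (T := T) (c := c) (k := k)) hcon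
  rw [APbase_port, APbase_port] at this
  exact hadj.ne this

/-- a 1-Lipschitz function increases by at most the length of a walk -/
lemma lip_le_walk {V : Type} {G : SimpleGraph V} {φ : V → ℕ}
    (hlip : ∀ a b, G.Adj a b → φ a ≤ φ b + 1) :
    ∀ {x y : V} (p : G.Walk x y), φ x ≤ φ y + p.length := by
  intro x y p
  induction p with
  | nil => simp
  | @cons a b d h p ih =>
    have := hlip a b h
    simp only [Walk.length_cons]
    omega

end APProof2
section APProof3

open SimpleGraph

variable {U : Type} {T : SimpleGraph U} {c : U → Bool} {k : U → ℕ}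
  {nu : U → U → Fin 3}

lemma spine_cast (u : U) (h : TreeLeaf T u) {a b : ℕ} (ha : a < k u) (hb : b < k u)
    (hab : a = b) : (APV.spine u h ⟨a, ha⟩ : APV U T c k) = .spine u h ⟨b, hb⟩ := by
  subst hab; rfl

lemma spine_ne_succ (u : U) (h : TreeLeaf T u) {a b : ℕ} (ha : a < k u) (hb : b < k u)
    (hab : a ≠ b) : (APV.spine u h ⟨a, ha⟩ : APV U T c k) ≠ .spine u h ⟨b, hb⟩ := by
  intro hcon
  simp only [APV.spine.injEq, heq_eq_eq, Fin.mk.injEq, true_and] at hcon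
  exact hab hcon

lemma spineWalkUp (u : U) (h : TreeLeaf T u) :
    ∀ (d a : ℕ) (hb : a + d < k u),
    ∃ p : (APGraph T c k nu).Walk (.spine u h ⟨a, by omega⟩) (.spine u h ⟨a + d, hb⟩),
      p.length = d := by
  intro d
  induction d with
  | zero => intro a hb; exact ⟨Walk.nil, rfl⟩
  | succ d ih =>
    intro a hb
    have h1 : a + 1 < k u := by omega
    have e1 : (APGraph T c k nu).Adj (.spine u h ⟨a, by omega⟩) (.spine u h ⟨a + 1, h1⟩) :=
      adjAP (spine_ne_succ u h _ _ (by omega)) (APRel.spineChain u h a h1)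
    obtain ⟨p, hp⟩ := ih (a + 1) (by omega)
    refine ⟨(Walk.cons e1 p).copy rfl (spine_cast u h _ _ (by omega)), ?_⟩
    simp [hp]

lemma spineWalk (u : U) (h : TreeLeaf T u) (a b : ℕ) (ha : a < k u) (hb : b < k u) :
    ∃ p : (APGraph T c k nu).Walk (.spine u h ⟨a, ha⟩) (.spine u h ⟨b, hb⟩),
      p.length = Nat.dist a b := by
  rcases le_total a b with hab | hab
  · obtain ⟨p, hp⟩ := spineWalkUp (c := c) (k := k) (nu := nu) u h (b - a) a (by omega)
    refine ⟨p.copy rfl (spine_cast u h _ hb ?_), ?_⟩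
    · omega
    · simp [hp, Nat.dist]; omega
  · obtain ⟨p, hp⟩ := spineWalkUp (c := c) (k := k) (nu := nu) u h (a - b) b (by omega)
    refine ⟨(p.copy rfl (spine_cast u h _ ha ?_)).reverse, ?_⟩
    · omega
    · simp [hp, Nat.dist]; omega

lemma attWalk (u : U) (h : TreeLeaf T u) (i : Fin (k u)) :
    ∃ p : (APGraph T c k nu).Walk (.att u h) (.leafv u h i),
      p.length = mnv k u i.val + 2 + cbit c u := by
  have h0 : 0 < k u := by have := i.2; omega
  have e3 : (APGraph T c k nu).Adj (.spine u h i) (.leafv u h i) :=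
    (adjAP (fun hcon => by cases hcon) (APRel.leafSpine u h i)).symm
  cases hcu : c u with
  | false =>
    by_cases hside : i.val ≤ k u - 1 - i.val
    · have e1 : (APGraph T c k nu).Adj (.att u h) (.spine u h ⟨0, h0⟩) :=
        adjAP (fun hcon => by cases hcon) (APRel.attSpineFirst u h hcu h0)
      obtain ⟨p2, hp2⟩ := spineWalk (c := c) (nu := nu) u h 0 i.val h0 i.2
      refine ⟨Walk.cons e1 (p2.append (Walk.cons e3 Walk.nil)), ?_⟩
      simp [hp2, Nat.dist, mnv, cbit, hcu]; omega
    · have e1 : (APGraph T c k nu).Adj (.att u h) (.spine u h ⟨k u - 1, by omega⟩) :=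
        adjAP (fun hcon => by cases hcon) (APRel.attSpineLast u h hcu h0)
      obtain ⟨p2, hp2⟩ := spineWalk (c := c) (nu := nu) u h (k u - 1) i.val (by omega) i.2
      refine ⟨Walk.cons e1 (p2.append (Walk.cons e3 Walk.nil)), ?_⟩
      simp [hp2, Nat.dist, mnv, cbit, hcu]; omega
  | true =>
    by_cases hside : i.val ≤ k u - 1 - i.val
    · have e0 : (APGraph T c k nu).Adj (.att u h) (.lpole u h hcu true) :=
        (adjAP (fun hcon => by cases hcon) (APRel.lpoleAtt u h hcu true)).symm
      have e1 : (APGraph T c k nu).Adj (.lpole u h hcu true) (.spine u h ⟨0, h0⟩) :=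
        adjAP (fun hcon => by cases hcon) (APRel.lpoleSpineFirst u h hcu h0)
      obtain ⟨p2, hp2⟩ := spineWalk (c := c) (nu := nu) u h 0 i.val h0 i.2
      refine ⟨Walk.cons e0 (Walk.cons e1 (p2.append (Walk.cons e3 Walk.nil))), ?_⟩
      simp [hp2, Nat.dist, mnv, cbit, hcu]; omega
    · have e0 : (APGraph T c k nu).Adj (.att u h) (.lpole u h hcu false) :=
        (adjAP (fun hcon => by cases hcon) (APRel.lpoleAtt u h hcu false)).symm
      have e1 : (APGraph T c k nu).Adj (.lpole u h hcu false) (.spine u h ⟨k u - 1, by omega⟩) :=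
        adjAP (fun hcon => by cases hcon) (APRel.lpoleSpineLast u h hcu h0)
      obtain ⟨p2, hp2⟩ := spineWalk (c := c) (nu := nu) u h (k u - 1) i.val (by omega) i.2
      refine ⟨Walk.cons e0 (Walk.cons e1 (p2.append (Walk.cons e3 Walk.nil))), ?_⟩
      simp [hp2, Nat.dist, mnv, cbit, hcu]; omega

end APProof3
section APProof4

open SimpleGraph

variable {U : Type} {T : SimpleGraph U} {c : U → Bool} {k : U → ℕ}
  {nu : U → U → Fin 3}

lemma bool_opp {a b : U} (hcp : ∀ a b : U, T.Adj a b → c a ≠ c b)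
    (hadj : T.Adj a b) (ha : c a = true) : c b = false := by
  have := hcp a b hadj
  cases hb : c b <;> simp_all

lemma bool_opp' {a b : U} (hcp : ∀ a b : U, T.Adj a b → c a ≠ c b)
    (hadj : T.Adj a b) (ha : c a = false) : c b = true := by
  have := hcp a b hadj
  cases hb : c b <;> simp_all

lemma portWalk (hcp : ∀ a b : U, T.Adj a b → c a ≠ c b) :
    ∀ {y w : U} (q : T.Walk y w) (hw : TreeLeaf T w) (j : Fin (k w)) {z : U},
      T.Adj z y →
    ∃ p : (APGraph T c k nu).Walk (APport T c k nu y z) (.leafv w hw j),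
      p.length ≤ 2 * q.length + (mnv k w j.val + 2) + cbit c y := by
  intro y w q
  induction q with
  | nil =>
    intro hw j z hz
    obtain ⟨p, hp⟩ := attWalk (nu := nu) _ hw j
    refine ⟨p.copy (APport_leaf hw z).symm rfl, ?_⟩
    simp [hp]
  | @cons y y2 w hadj q2 ih =>
    intro hw j z hz
    have ecross := adjAP_cross (c := c) (k := k) (nu := nu) hadj
    obtain ⟨p3, hp3⟩ := ih hw j (z := y) hadj
    have hc2 := cbit_le_one c y2
    by_cases hly : TreeLeaf T y
    · have hpp : APport T c k nu y z = APport T c k nu y y2 := by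
        rw [APport_leaf hly, APport_leaf hly]
      refine ⟨(Walk.cons ecross p3).copy hpp.symm rfl, ?_⟩
      simp only [Walk.length_copy, Walk.length_cons, Walk.length_cons]
      omega
    · by_cases hcy : c y = true
      · have hcy2 : c y2 = false := bool_opp hcp hadj hcy
        have e1 : (APGraph T c k nu).Adj (.gv y hly hcy (nu y z)) (.pole y hly hcy true) :=
          (adjAP (fun hcon => by cases hcon)
            (APRel.poleGv y hly hcy true (nu y z))).symm
        have e2 : (APGraph T c k nu).Adj (.pole y hly hcy true) (.gv y hly hcy (nu y y2)) :=
          adjAP (fun hcon => by cases hcon) (APRel.poleGv y hly hcy true (nu y y2))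
        refine ⟨(Walk.cons e1 (Walk.cons e2
          ((Walk.cons ecross p3).copy (APport_black hly hcy y2) rfl))).copy
          (APport_black hly hcy z).symm rfl, ?_⟩
        simp only [Walk.length_copy, Walk.length_cons]
        rw [cbit_true hcy] at *
        rw [cbit_false hcy2] at hp3
        omega
      · have hcyf : c y = false := by cases h2 : c y <;> simp_all
        have hpp : APport T c k nu y z = APport T c k nu y y2 := by
          rw [APport_red hly hcyf, APport_red hly hcyf]
        refine ⟨(Walk.cons ecross p3).copy hpp.symm rfl, ?_⟩
        simp only [Walk.length_copy, Walk.length_cons]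
        omega

end APProof4
section APProof5

open SimpleGraph
open Classical

variable {U : Type} {T : SimpleGraph U} {c : U → Bool} {k : U → ℕ}
  {nu : U → U → Fin 3}

lemma phi_plain (w : U) (j : ℕ) {z : U} (h : ¬ TreeLeaf T z) (hc0 : c z = false) :
    phiAP T c k nu w j (.plain z h hc0) = 2 * T.dist z w + (mnv k w j + 2) := by
  simp [phiAP]

lemma phi_pole (w : U) (j : ℕ) {z : U} (h : ¬ TreeLeaf T z) (hc1 : c z = true) (b : Bool) :
    phiAP T c k nu w j (.pole z h hc1 b) = 2 * T.dist z w + (mnv k w j + 2) := by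
  simp [phiAP]

lemma phi_gv_fwd (w : U) (j : ℕ) {z : U} (h : ¬ TreeLeaf T z) (hc1 : c z = true)
    {i : Fin 3} (hF : FwdAP T nu w z i) :
    phiAP T c k nu w j (.gv z h hc1 i) = 2 * T.dist z w + (mnv k w j + 2) - 1 := by
  simp only [phiAP]
  rw [if_pos hF]

lemma phi_gv_nfwd (w : U) (j : ℕ) {z : U} (h : ¬ TreeLeaf T z) (hc1 : c z = true)
    {i : Fin 3} (hF : ¬ FwdAP T nu w z i) :
    phiAP T c k nu w j (.gv z h hc1 i) = 2 * T.dist z w + (mnv k w j + 2) + 1 := by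
  simp only [phiAP]
  rw [if_neg hF]

lemma phi_att_ne (w : U) (j : ℕ) {z : U} (h : TreeLeaf T z) (hzw : z ≠ w) :
    phiAP T c k nu w j (.att z h) =
      2 * T.dist z w + (mnv k w j + 2) - cbit c z := by
  simp only [phiAP]
  rw [if_neg hzw]

lemma phi_att_eq (j : ℕ) {z : U} (h : TreeLeaf T z) :
    phiAP T c k nu z j (.att z h) = (mnv k z j + 2) + cbit c z := by
  simp [phiAP]

/-- not-forward from injectivity of `nu` -/
lemma nfwd_of_far (hcp : ∀ a b : U, T.Adj a b → c a ≠ c b)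
    (hnu : ∀ u : U, Set.InjOn (nu u) {x | T.Adj u x}) {w z y : U}
    (hadj : T.Adj z y) (hfar : ¬ T.dist y w < T.dist z w) :
    ¬ FwdAP T nu w z (nu z y) := by
  rintro ⟨y', hy1, hy2, hy3⟩
  have : y' = y := hnu z (by exact hy1) (by exact hadj) hy3
  subst this
  exact hfar hy2

lemma cross_le (hconn : T.Connected) (hcp : ∀ a b : U, T.Adj a b → c a ≠ c b)
    (hnu : ∀ u : U, Set.InjOn (nu u) {x | T.Adj u x}) {w : U} (hw : TreeLeaf T w)
    (j : ℕ) :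
    ∀ a b : U, T.Adj a b →
      phiAP T c k nu w j (APport T c k nu a b) ≤
        phiAP T c k nu w j (APport T c k nu b a) + 1 := by
  intro a b hadj
  have hab : a ≠ b := hadj.ne
  have hcab := cbit_add_eq_one (hcp a b hadj)
  have hca1 := cbit_le_one c a
  have hcb1 := cbit_le_one c b
  by_cases hbw : b = w
  · -- b is the target leaf
    cases hbw
    have hDa : T.dist a w = 1 := adj_dist_one hconn hadj
    rw [APport_leaf hw a, phi_att_eq]
    by_cases hla : TreeLeaf T a
    · rw [APport_leaf hla w, phi_att_ne _ _ hla hadj.ne, hDa]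
      omega
    · by_cases hca : c a = true
      · rw [APport_black hla hca w, phi_gv_fwd _ _ hla hca
          ⟨w, hadj, by simp [SimpleGraph.dist_self, hDa], rfl⟩, hDa]
        omega
      · have hcaf : c a = false := by cases h2 : c a <;> simp_all
        rw [cbit_false hcaf] at hcab
        rw [APport_red hla hcaf w, phi_plain, hDa]
        omega
  · by_cases haw : a = w
    · -- a is the target leaf
      cases haw
      have hDb : T.dist b w = 1 := adj_dist_one hconn hadj.symm
      rw [APport_leaf hw b, phi_att_eq]
      by_cases hlb : TreeLeaf T b
      · rw [APport_leaf hlb w, phi_att_ne _ _ hlb (hadj.symm.ne), hDb]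
        omega
      · by_cases hcb : c b = true
        · rw [APport_black hlb hcb w, phi_gv_fwd _ _ hlb hcb
            ⟨w, hadj.symm, by simp [SimpleGraph.dist_self, hDb], rfl⟩, hDb]
          omega
        · have hcbf : c b = false := by cases h2 : c b <;> simp_all
          rw [cbit_false hcbf] at hcab
          rw [APport_red hlb hcbf w, phi_plain, hDb]
          omega
    · -- neither end is the target leaf
      have hDa : 1 ≤ T.dist a w := hconn.pos_dist_of_ne haw
      have hDb : 1 ≤ T.dist b w := hconn.pos_dist_of_ne hbw
      have hleafa : TreeLeaf T a → T.dist a w = T.dist b w + 1 :=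
        fun hla => leaf_dist hconn hla hadj haw
      have hleafb : TreeLeaf T b → T.dist b w = T.dist a w + 1 :=
        fun hlb => leaf_dist hconn hlb hadj.symm hbw
      rcases adj_dist_cases hconn hcp hadj w with hd | hd
      · -- dist a w = dist b w + 1, b is closer
        by_cases hla : TreeLeaf T a
        · have := hleafa hla
          rw [APport_leaf hla b, phi_att_ne _ _ hla haw]
          by_cases hlb : TreeLeaf T b
          · have := hleafb hlb; omega
          · by_cases hcb : c b = true
            · have hnfb : ¬ FwdAP T nu w b (nu b a) :=
                nfwd_of_far hcp hnu hadj.symm (by omega)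
              rw [APport_black hlb hcb a, phi_gv_nfwd _ _ hlb hcb hnfb]
              omega
            · have hcbf : c b = false := by cases h2 : c b <;> simp_all
              rw [cbit_false hcbf] at hcab
              rw [APport_red hlb hcbf a, phi_plain]
              omega
        · by_cases hca : c a = true
          · have hFa : FwdAP T nu w a (nu a b) := ⟨b, hadj, by omega, rfl⟩
            rw [APport_black hla hca b, phi_gv_fwd _ _ hla hca hFa]
            by_cases hlb : TreeLeaf T b
            · have := hleafb hlb; omega
            · have hcbf : c b = false := bool_opp hcp hadj hca
              rw [APport_red hlb hcbf a, phi_plain]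
              omega
          · have hcaf : c a = false := by cases h2 : c a <;> simp_all
            have hcbt : c b = true := bool_opp' hcp hadj hcaf
            rw [APport_red hla hcaf b, phi_plain]
            by_cases hlb : TreeLeaf T b
            · have := hleafb hlb; omega
            · have hnfb : ¬ FwdAP T nu w b (nu b a) :=
                nfwd_of_far hcp hnu hadj.symm (by omega)
              rw [APport_black hlb hcbt a, phi_gv_nfwd _ _ hlb hcbt hnfb]
              omega
      · -- dist b w = dist a w + 1, a is closer
        by_cases hla : TreeLeaf T a
        · have := hleafa hla; omega
        · by_cases hca : c a = true
          · have hnfa : ¬ FwdAP T nu w a (nu a b) :=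
              nfwd_of_far hcp hnu hadj (by omega)
            rw [APport_black hla hca b, phi_gv_nfwd _ _ hla hca hnfa]
            by_cases hlb : TreeLeaf T b
            · rw [APport_leaf hlb a, phi_att_ne _ _ hlb hbw]
              rw [cbit_true hca] at hcab
              omega
            · have hcbf : c b = false := bool_opp hcp hadj hca
              rw [APport_red hlb hcbf a, phi_plain]
              omega
          · have hcaf : c a = false := by cases h2 : c a <;> simp_all
            have hcbt : c b = true := bool_opp' hcp hadj hcaf
            rw [APport_red hla hcaf b, phi_plain]
            by_cases hlb : TreeLeaf T b
            · rw [APport_leaf hlb a, phi_att_ne _ _ hlb hbw]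
              rw [cbit_false hcaf] at hcab
              omega
            · have hFb : FwdAP T nu w b (nu b a) := ⟨a, hadj.symm, by omega, rfl⟩
              rw [APport_black hlb hcbt a, phi_gv_fwd _ _ hlb hcbt hFb]
              omega

end APProof5
section APProof6

open SimpleGraph
open Classical

variable {U : Type} {T : SimpleGraph U} {c : U → Bool} {k : U → ℕ}
  {nu : U → U → Fin 3}

lemma phi_lip (hconn : T.Connected) (hcp : ∀ a b : U, T.Adj a b → c a ≠ c b)
    (hnu : ∀ u : U, Set.InjOn (nu u) {x | T.Adj u x})
    (hk : ∀ u : U, TreeLeaf T u → k u = 2 ∨ k u = 3)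
    {w : U} (hw : TreeLeaf T w) {j : ℕ} (hj : j < k w) :
    ∀ a b : APV U T c k, (APGraph T c k nu).Adj a b →
      phiAP T c k nu w j a ≤ phiAP T c k nu w j b + 1 := by
  have hkw := hk w hw
  suffices H : ∀ a b, APRel T c k nu a b →
      phiAP T c k nu w j a ≤ phiAP T c k nu w j b + 1 ∧
      phiAP T c k nu w j b ≤ phiAP T c k nu w j a + 1 by
    intro a b hab
    rw [APGraph, SimpleGraph.fromRel_adj] at hab
    obtain ⟨-, h | h⟩ := hab
    · exact (H _ _ h).1
    · exact (H _ _ h).2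
  intro a b hrel
  cases hrel with
  | poleGv z h hc1 b i =>
    have hzw : z ≠ w := fun e => h (by rw [e]; exact hw)
    have hD := hconn.pos_dist_of_ne hzw
    by_cases hF : FwdAP T nu w z i
    · refine ⟨?_, ?_⟩ <;> rw [phi_pole, phi_gv_fwd _ _ h hc1 hF] <;> omega
    · refine ⟨?_, ?_⟩ <;> rw [phi_pole, phi_gv_nfwd _ _ h hc1 hF] <;> omega
  | lpoles z h hc1 =>
    by_cases hzw : z = w
    · cases hzw
      refine ⟨?_, ?_⟩ <;> · simp [phiAP, mnv] <;> omega
    · have hD := hconn.pos_dist_of_ne hzw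
      refine ⟨?_, ?_⟩ <;> · simp [phiAP, hzw] <;> omega
  | lpoleAtt z h hc1 b =>
    by_cases hzw : z = w
    · cases hzw
      cases b <;> refine ⟨?_, ?_⟩ <;>
        · simp [phiAP, mnv, cbit, hc1] <;> (rcases hkw with h2 | h2 <;> omega)
    · have hD := hconn.pos_dist_of_ne hzw
      refine ⟨?_, ?_⟩ <;> · simp [phiAP, hzw, cbit, hc1] <;> omega
  | lpoleSpineFirst z h hc1 h0 =>
    by_cases hzw : z = w
    · cases hzw
      refine ⟨?_, ?_⟩ <;> · simp [phiAP, mnv, Nat.dist] <;> (rcases hkw with h2 | h2 <;> omega)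
    · have hD := hconn.pos_dist_of_ne hzw
      refine ⟨?_, ?_⟩ <;> · simp [phiAP, hzw, mnv] <;> omega
  | lpoleSpineLast z h hc1 h0 =>
    by_cases hzw : z = w
    · cases hzw
      refine ⟨?_, ?_⟩ <;> · simp [phiAP, mnv, Nat.dist] <;> (rcases hkw with h2 | h2 <;> omega)
    · have hD := hconn.pos_dist_of_ne hzw
      refine ⟨?_, ?_⟩ <;> · simp [phiAP, hzw, mnv] <;> omega
  | spineChain z h i hi =>
    by_cases hzw : z = w
    · cases hzw
      refine ⟨?_, ?_⟩ <;> · simp [phiAP, Nat.dist] <;> omega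
    · have hD := hconn.pos_dist_of_ne hzw
      refine ⟨?_, ?_⟩ <;> · simp [phiAP, hzw, mnv] <;> omega
  | leafSpine z h i =>
    by_cases hzw : z = w
    · cases hzw
      refine ⟨?_, ?_⟩ <;> · simp [phiAP, Nat.dist] <;> (split_ifs <;> omega)
    · have hD := hconn.pos_dist_of_ne hzw
      refine ⟨?_, ?_⟩ <;> · simp [phiAP, hzw] <;> omega
  | attSpineFirst z h hc0 h0 =>
    by_cases hzw : z = w
    · cases hzw
      refine ⟨?_, ?_⟩ <;>
        · simp [phiAP, mnv, cbit, hc0, Nat.dist] <;> (rcases hkw with h2 | h2 <;> omega)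
    · have hD := hconn.pos_dist_of_ne hzw
      refine ⟨?_, ?_⟩ <;> · simp [phiAP, hzw, mnv, cbit, hc0] <;> omega
  | attSpineLast z h hc0 h0 =>
    by_cases hzw : z = w
    · cases hzw
      refine ⟨?_, ?_⟩ <;>
        · simp [phiAP, mnv, cbit, hc0, Nat.dist] <;> (rcases hkw with h2 | h2 <;> omega)
    · have hD := hconn.pos_dist_of_ne hzw
      refine ⟨?_, ?_⟩ <;> · simp [phiAP, hzw, mnv, cbit, hc0] <;> omega
  | cross a b hadj =>
    exact ⟨cross_le hconn hcp hnu hw j a b hadj,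
      cross_le hconn hcp hnu hw j b a hadj.symm⟩

end APProof6
section APProof7

open SimpleGraph
open Classical

variable {U : Type} {T : SimpleGraph U} {c : U → Bool} {k : U → ℕ}
  {nu : U → U → Fin 3}

lemma phi_leafv_ne (w : U) (j : ℕ) {z : U} (h : TreeLeaf T z) (hzw : z ≠ w)
    (i : Fin (k z)) :
    phiAP T c k nu w j (.leafv z h i) =
      2 * T.dist z w + (mnv k w j + 2) + mnv k z i.val + 2 := by
  simp only [phiAP]; rw [if_neg hzw]

lemma phi_leafv_self (j : ℕ) {z : U} (h : TreeLeaf T z) {i : Fin (k z)}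
    (hij : i.val = j) : phiAP T c k nu z j (.leafv z h i) = 0 := by
  simp [phiAP, hij]

lemma phi_leafv_same_ne (j : ℕ) {z : U} (h : TreeLeaf T z) {i : Fin (k z)}
    (hij : i.val ≠ j) :
    phiAP T c k nu z j (.leafv z h i) = Nat.dist i.val j + 2 := by
  simp [phiAP, hij]

/-- Main evaluation: the leaf-to-leaf distance in an alt-path structure is
given by a formula independent of the colouring `c` and the port choice `nu`. -/
lemma AP_dist_eval (hconn : T.Connected) (hcp : ∀ a b : U, T.Adj a b → c a ≠ c b)
    (hk : ∀ u : U, TreeLeaf T u → k u = 2 ∨ k u = 3)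
    (hnu : ∀ u : U, Set.InjOn (nu u) {x | T.Adj u x})
    {u w : U} (hu : TreeLeaf T u) (hw : TreeLeaf T w) (i : Fin (k u)) (j : Fin (k w)) :
    (APGraph T c k nu).dist (.leafv u hu i) (.leafv w hw j) =
      if u = w then (if i.val = j.val then 0 else Nat.dist i.val j.val + 2)
      else 2 * T.dist u w + (mnv k u i.val + 2) + (mnv k w j.val + 2) := by
  by_cases huw : u = w
  · cases huw
    rw [if_pos rfl]
    by_cases hij : i.val = j.val
    · rw [if_pos hij]
      have : i = j := Fin.ext hij
      subst this
      exact SimpleGraph.dist_self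
    · rw [if_neg hij]
      -- upper bound walk
      have e1 : (APGraph T c k nu).Adj (.leafv u hu i) (.spine u hu i) :=
        adjAP (fun hcon => by cases hcon) (APRel.leafSpine u hu i)
      have e2 : (APGraph T c k nu).Adj (.spine u hu j) (.leafv u hw j) :=
        (adjAP (fun hcon => by cases hcon) (APRel.leafSpine u hw j)).symm
      obtain ⟨p2, hp2⟩ := spineWalk (c := c) (nu := nu) u hu i.val j.val i.2 j.2
      have hup : (APGraph T c k nu).dist (.leafv u hu i) (.leafv u hw j) ≤
          Nat.dist i.val j.val + 2 := by
        have := SimpleGraph.dist_le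
          (Walk.cons e1 (p2.append (Walk.cons e2 Walk.nil)))
        simpa [hp2] using this
      -- lower bound via potential
      have hlip := phi_lip hconn hcp hnu hk hu (j := j.val) j.2
      have hreach : (APGraph T c k nu).Reachable (.leafv u hu i) (.leafv u hw j) :=
        (Walk.cons e1 (p2.append (Walk.cons e2 Walk.nil))).reachable
      obtain ⟨q, hq⟩ := hreach.exists_walk_length_eq_dist
      have hlow := lip_le_walk hlip q
      rw [hq, phi_leafv_same_ne _ hu hij, phi_leafv_self _ hw rfl] at hlow
      omega
  · rw [if_neg huw]
    have hcu1 := cbit_le_one c u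
    obtain ⟨q, hq⟩ := (hconn.preconnected u w).exists_walk_length_eq_dist
    cases q with
    | nil => exact absurd rfl huw
    | @cons _ y2 _ hadj q2 =>
      have hcy := cbit_add_eq_one (hcp u y2 hadj)
      obtain ⟨p1, hp1⟩ := attWalk (nu := nu) u hu i
      have ecross := adjAP_cross (c := c) (k := k) (nu := nu) hadj
      obtain ⟨p3, hp3⟩ := portWalk hcp q2 hw j (z := u) hadj
      have hport : APport T c k nu u y2 = APV.att u hu := APport_leaf hu y2
      have hfull := SimpleGraph.dist_le
        (p1.reverse.append ((Walk.cons ecross p3).copy hport rfl))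
      simp only [Walk.length_append, Walk.length_reverse, Walk.length_copy,
        Walk.length_cons, hp1] at hfull
      simp only [Walk.length_cons] at hq
      -- lower bound
      have hlip := phi_lip hconn hcp hnu hk hw (j := j.val) j.2
      have hreach : (APGraph T c k nu).Reachable (.leafv u hu i) (.leafv w hw j) :=
        (p1.reverse.append ((Walk.cons ecross p3).copy hport rfl)).reachable
      obtain ⟨q', hq'⟩ := hreach.exists_walk_length_eq_dist
      have hlow := lip_le_walk hlip q'
      rw [hq', phi_leafv_ne _ _ hu huw, phi_leafv_self _ hw rfl] at hlow
      omega

end APProof7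
/-- two similar alt-path structures of the same binary tree `T`
realize the same shortest distance matrix on corresponding leaves. -/
theorem similar_altpath_same_dist {U : Type} (T : SimpleGraph U)
    (hconn : T.Connected) (hacyc : T.IsAcyclic)
    (hdeg : ∀ u : U, gdeg T u = 1 ∨ gdeg T u = 3)
    (hleaves : ∃ u w : U, u ≠ w ∧ TreeLeaf T u ∧ TreeLeaf T w)
    (c : U → Bool) (hc : ∀ u w : U, T.Adj u w → c u ≠ c w)
    (k : U → ℕ) (hk : ∀ u : U, TreeLeaf T u → k u = 2 ∨ k u = 3)
    (nu nu' : U → U → Fin 3)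
    (hnu : ∀ u : U, Set.InjOn (nu u) {w | T.Adj u w})
    (hnu' : ∀ u : U, Set.InjOn (nu' u) {w | T.Adj u w}) :
    ∀ (u w : U) (hu : TreeLeaf T u) (hw : TreeLeaf T w)
      (i : Fin (k u)) (j : Fin (k w)),
      (APGraph T c k nu).dist (.leafv u hu i) (.leafv w hw j) =
        (APGraph T (fun z => !c z) k nu').dist (.leafv u hu i) (.leafv w hw j) := by
  intro u w hu hw i j
  have hcp' : ∀ a b : U, T.Adj a b → (fun z => !c z) a ≠ (fun z => !c z) b := by
    intro a b h hh
    exact hc a b h (by simpa using hh)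
  rw [AP_dist_eval hconn hc hk hnu hu hw i j,
    AP_dist_eval hconn hcp' hk hnu' hu hw i j]
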